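/- For every nonempty D_r ⊆ D, the unique minimizer θ̂_r* of L̂_{D_r} lies in the affine subspace C := θ̂* + col(J(X)ᵀ) of ℝ^{d_θ}, where θ̂* is the unique minimizer of L̂_D and col(J(X)ᵀ) denotes the column space of J(X)ᵀ. -/

import Mathlib

open Finset Matrix

noncomputable section

/-- Squared ℓ₂ norm of a finitely-indexed real vector. -/
def sqnorm {ι : Type*} [Fintype ι] (v : ι → ℝ) : ℝ := ∑ i, v i ^ 2

/-- The linearized model `f^lin(x, θ) = f(x, θ') + J(x)(θ - θ')`, where `f0 x = f(x, θ')`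
and `J x` is the Jacobian of `f(x, ·)` at `θ'`. -/
def flin {din dout dθ : ℕ}
    (f0 : (Fin din → ℝ) → Fin dout → ℝ)
    (J : (Fin din → ℝ) → Matrix (Fin dout) (Fin dθ) ℝ)
    (θ' : Fin dθ → ℝ) (xt : Fin din → ℝ) (θ : Fin dθ → ℝ) : Fin dout → ℝ :=
  f0 xt + J xt *ᵥ (θ - θ')

/-- Regularized empirical risk `L̂_S(θ)` of the linearized model over the subset of the
dataset indexed by `S`. -/
def empRisk {din dout dθ n : ℕ}
    (f0 : (Fin din → ℝ) → Fin dout → ℝ)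
    (J : (Fin din → ℝ) → Matrix (Fin dout) (Fin dθ) ℝ)
    (θ' : Fin dθ → ℝ) (X : Fin n → Fin din → ℝ) (Y : Fin n → Fin dout → ℝ)
    (ℓ : (Fin dout → ℝ) → (Fin dout → ℝ) → ℝ) (lam : ℝ)
    (S : Finset (Fin n)) (θ : Fin dθ → ℝ) : ℝ :=
  (S.card : ℝ)⁻¹ * ∑ i ∈ S, (ℓ (flin f0 J θ' (X i) θ) (Y i) + lam / 2 * sqnorm (θ - θ'))

/-- Gradient of the loss `ℓ(·, y)` in its first argument, as a vector. -/
def gradloss {dout : ℕ} (ℓ : (Fin dout → ℝ) → (Fin dout → ℝ) → ℝ)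
    (ytgt u : Fin dout → ℝ) : Fin dout → ℝ :=
  fun a => fderiv ℝ (fun v => ℓ v ytgt) u (Pi.single a 1)

/-- Hessian of the loss `ℓ(·, y)` in its first argument, as a matrix. -/
def hessloss {dout : ℕ} (ℓ : (Fin dout → ℝ) → (Fin dout → ℝ) → ℝ)
    (ytgt u : Fin dout → ℝ) : Fin dout → Fin dout → ℝ :=
  fun a b => fderiv ℝ (fun v => fderiv ℝ (fun w => ℓ w ytgt) v (Pi.single b 1)) u (Pi.single a 1)

/-- Stacked Jacobian `J(X) ∈ ℝ^{d_out·n × d_θ}`, whose `i`-th row block is `J(x_i)`. -/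
def JX {din dout dθ n : ℕ}
    (J : (Fin din → ℝ) → Matrix (Fin dout) (Fin dθ) ℝ)
    (X : Fin n → Fin din → ℝ) : Matrix (Fin n × Fin dout) (Fin dθ) ℝ :=
  fun q p => J (X q.1) q.2 p

/-- Empirical NTK Gram matrix `K = K(X, X) = J(X) J(X)ᵀ`. -/
def Kmat {din dout dθ n : ℕ}
    (J : (Fin din → ℝ) → Matrix (Fin dout) (Fin dθ) ℝ)
    (X : Fin n → Fin din → ℝ) : Matrix (Fin n × Fin dout) (Fin n × Fin dout) ℝ :=
  JX J X * (JX J X)ᵀ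

/-- NTK row block `K(x, X) = J(x) J(X)ᵀ ∈ ℝ^{d_out × d_out·n}`. -/
def KxX {din dout dθ n : ℕ}
    (J : (Fin din → ℝ) → Matrix (Fin dout) (Fin dθ) ℝ)
    (X : Fin n → Fin din → ℝ) (xt : Fin din → ℝ) : Matrix (Fin dout) (Fin n × Fin dout) ℝ :=
  J xt * (JX J X)ᵀ

/-- Reparameterization `φ(Δα) = θ̂* + J(X)ᵀ Δα`. -/
def phi {din dout dθ n : ℕ}
    (J : (Fin din → ℝ) → Matrix (Fin dout) (Fin dθ) ℝ)
    (X : Fin n → Fin din → ℝ) (θstar : Fin dθ → ℝ)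
    (Δα : Fin n × Fin dout → ℝ) : Fin dθ → ℝ :=
  θstar + (JX J X)ᵀ *ᵥ Δα

/-- Reparameterized model `g^lin(x, Δα) = f^lin(x, θ̂*) + K(x, X) Δα`. -/
def glin {din dout dθ n : ℕ}
    (f0 : (Fin din → ℝ) → Fin dout → ℝ)
    (J : (Fin din → ℝ) → Matrix (Fin dout) (Fin dθ) ℝ)
    (θ' : Fin dθ → ℝ) (X : Fin n → Fin din → ℝ) (θstar : Fin dθ → ℝ)
    (xt : Fin din → ℝ) (Δα : Fin n × Fin dout → ℝ) : Fin dout → ℝ :=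
  flin f0 J θ' xt θstar + KxX J X xt *ᵥ Δα

/-- Dual risk `L̃_S(Δα) = (1/|S|) Σ_{(x,y)∈S} ( ℓ(g^lin(x, Δα), y) + (λ/2)‖φ(Δα) − θ'‖₂² )`. -/
def dualRisk {din dout dθ n : ℕ}
    (f0 : (Fin din → ℝ) → Fin dout → ℝ)
    (J : (Fin din → ℝ) → Matrix (Fin dout) (Fin dθ) ℝ)
    (θ' : Fin dθ → ℝ) (X : Fin n → Fin din → ℝ) (Y : Fin n → Fin dout → ℝ)
    (ℓ : (Fin dout → ℝ) → (Fin dout → ℝ) → ℝ) (lam : ℝ) (θstar : Fin dθ → ℝ)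
    (S : Finset (Fin n)) (Δα : Fin n × Fin dout → ℝ) : ℝ :=
  (S.card : ℝ)⁻¹ *
    ∑ i ∈ S, (ℓ (glin f0 J θ' X θstar (X i) Δα) (Y i) +
      lam / 2 * sqnorm (phi J X θstar Δα - θ'))

/-- The dual coefficient vector `Δα_r*` of Proposition 3.1: on the forget indices
(`q.1 ∉ Dr`) it is `(1/λ) ∇_{f^lin(X_f, θ̂*)} L̂_D`, and on the retain indices (`q.1 ∈ Dr`)
it is `−(1/λ)( ∇_{f^lin(X_r, θ̂_r*)} L̂_{D_r} − ∇_{f^lin(X_r, θ̂*)} L̂_D )`. -/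
def dalpha {din dout dθ n : ℕ}
    (f0 : (Fin din → ℝ) → Fin dout → ℝ)
    (J : (Fin din → ℝ) → Matrix (Fin dout) (Fin dθ) ℝ)
    (θ' : Fin dθ → ℝ) (X : Fin n → Fin din → ℝ) (Y : Fin n → Fin dout → ℝ)
    (ℓ : (Fin dout → ℝ) → (Fin dout → ℝ) → ℝ) (lam : ℝ)
    (Dr : Finset (Fin n)) (θstar θrstar : Fin dθ → ℝ) :
    Fin n × Fin dout → ℝ :=
  fun q =>
    if q.1 ∈ Dr then
      -lam⁻¹ * ((Dr.card : ℝ)⁻¹ * gradloss ℓ (Y q.1) (flin f0 J θ' (X q.1) θrstar) q.2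
        - (n : ℝ)⁻¹ * gradloss ℓ (Y q.1) (flin f0 J θ' (X q.1) θstar) q.2)
    else
      lam⁻¹ * ((n : ℝ)⁻¹ * gradloss ℓ (Y q.1) (flin f0 J θ' (X q.1) θstar) q.2)


section Aux

open scoped RealInnerProductSpace

lemma sqnorm_eq_norm_sq {ι : Type*} [Fintype ι] (v : ι → ℝ) :
    sqnorm v = ‖(WithLp.toLp 2 v : EuclideanSpace ℝ ι)‖ ^ 2 := by
  rw [EuclideanSpace.norm_eq, Real.sq_sqrt (by positivity)]
  simp [sqnorm]

lemma span_to_mulVec {m k : Type*} [Fintype m] [Fintype k] [DecidableEq k]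
    (M : Matrix m k ℝ) (x : EuclideanSpace ℝ k)
    (hx : x ∈ Submodule.span ℝ (Set.range fun q => (WithLp.toLp 2 (M q) : EuclideanSpace ℝ k))) :
    ∃ α : m → ℝ, Mᵀ *ᵥ α = (x : k → ℝ) := by
  rw [Submodule.mem_span_range_iff_exists_fun] at hx
  obtain ⟨c, hc⟩ := hx
  refine ⟨c, ?_⟩
  funext t
  rw [← hc]
  simp only [WithLp.ofLp_sum, WithLp.ofLp_smul, WithLp.ofLp_toLp]
  simp [Matrix.mulVec, dotProduct, Finset.sum_apply, mul_comm]

/-- Any minimizer of the regularized empirical risk has `θ - θ'` in the span of the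
rows of the stacked Jacobian. -/
lemma min_sub_mem_span {din dout dθ n : ℕ}
    (f0 : (Fin din → ℝ) → Fin dout → ℝ)
    (J : (Fin din → ℝ) → Matrix (Fin dout) (Fin dθ) ℝ)
    (θ' : Fin dθ → ℝ) (X : Fin n → Fin din → ℝ) (Y : Fin n → Fin dout → ℝ)
    (ℓ : (Fin dout → ℝ) → (Fin dout → ℝ) → ℝ) (lam : ℝ) (hlam : 0 < lam)
    (S : Finset (Fin n)) (hS : S.Nonempty) (θm : Fin dθ → ℝ)
    (hmin : ∀ θ : Fin dθ → ℝ,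
      empRisk f0 J θ' X Y ℓ lam S θm ≤ empRisk f0 J θ' X Y ℓ lam S θ) :
    (WithLp.toLp 2 (θm - θ') : EuclideanSpace ℝ (Fin dθ)) ∈
      Submodule.span ℝ (Set.range fun q : Fin n × Fin dout =>
        (WithLp.toLp 2 (JX J X q) : EuclideanSpace ℝ (Fin dθ))) := by
  set V : Submodule ℝ (EuclideanSpace ℝ (Fin dθ)) :=
    Submodule.span ℝ (Set.range fun q : Fin n × Fin dout =>
      (WithLp.toLp 2 (JX J X q) : EuclideanSpace ℝ (Fin dθ))) with hV
  by_contra hw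
  set w : EuclideanSpace ℝ (Fin dθ) := WithLp.toLp 2 (θm - θ') with hwdef
  set p : EuclideanSpace ℝ (Fin dθ) := (V.orthogonalProjection w : EuclideanSpace ℝ (Fin dθ))
    with hpdef
  have hpV : p ∈ V := (V.orthogonalProjection w).2
  have hperp : w - p ∈ Vᗮ := V.sub_starProjection_mem_orthogonal w
  have hrow : ∀ (i : Fin n) (a : Fin dout),
      (WithLp.toLp 2 (fun t => J (X i) a t) : EuclideanSpace ℝ (Fin dθ)) ∈ V :=
    fun i a => Submodule.subset_span ⟨(i, a), rfl⟩
  have hinner : ∀ (i : Fin n) (a : Fin dout),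
      ∑ t, J (X i) a t * p t = ∑ t, J (X i) a t * (θm - θ') t := by
    intro i a
    have h0 := (Submodule.mem_orthogonal V (w - p)).mp hperp _ (hrow i a)
    have h1 : ∑ t, J (X i) a t * (w - p) t = 0 := by
      simpa [PiLp.inner_apply, RCLike.inner_apply, mul_comm] using h0
    have h2 : ∀ t, (w - p) t = (θm - θ') t - p t := fun t => rfl
    have h3 : ∑ t, (J (X i) a t * (θm - θ') t - J (X i) a t * p t) = 0 := by
      rw [← h1]; congr 1; funext t; rw [h2 t]; ring
    rw [Finset.sum_sub_distrib] at h3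
    linarith
  -- the projected parameter
  set θt : Fin dθ → ℝ := θ' + p.ofLp with hθt
  have hsub : θt - θ' = p.ofLp := add_sub_cancel_left θ' _
  have hflin : ∀ i : Fin n, flin f0 J θ' (X i) θt = flin f0 J θ' (X i) θm := by
    intro i
    funext a
    simp only [flin, Pi.add_apply, hsub]
    congr 1
    simp only [Matrix.mulVec, dotProduct]
    exact hinner i a
  have hne : w ≠ p := by
    intro h
    exact hw (h ▸ hpV)
  have hip : (inner ℝ p (w - p) : ℝ) = 0 := (Submodule.mem_orthogonal V (w - p)).mp hperp p hpV
  have hpyth : ‖w‖ ^ 2 = ‖p‖ ^ 2 + ‖w - p‖ ^ 2 := by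
    have := norm_add_sq_real p (w - p)
    simpa [hip] using this
  have hlt : ‖p‖ ^ 2 < ‖w‖ ^ 2 := by
    have h0 : 0 < ‖w - p‖ ^ 2 := by
      have hne0 : w - p ≠ 0 := sub_ne_zero.mpr hne
      have := norm_pos_iff.mpr hne0
      positivity
    linarith
  have hsq1 : sqnorm (θt - θ') = ‖p‖ ^ 2 := by
    rw [hsub]; exact sqnorm_eq_norm_sq _
  have hsq2 : sqnorm (θm - θ') = ‖w‖ ^ 2 := sqnorm_eq_norm_sq _
  have hcard : (0 : ℝ) < (S.card : ℝ)⁻¹ := by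
    have := Finset.card_pos.mpr hS
    exact inv_pos.mpr (by exact_mod_cast this)
  have hstrict : empRisk f0 J θ' X Y ℓ lam S θt < empRisk f0 J θ' X Y ℓ lam S θm := by
    unfold empRisk
    apply mul_lt_mul_of_pos_left _ hcard
    apply Finset.sum_lt_sum_of_nonempty hS
    intro i _
    rw [hflin i, hsq1, hsq2]
    have : lam / 2 * ‖p‖ ^ 2 < lam / 2 * ‖w‖ ^ 2 := by
      apply mul_lt_mul_of_pos_left hlt
      positivity
    linarith
  exact absurd (hmin θt) (not_le.mpr hstrict)

end Aux

/-- for every nonempty `D_r ⊆ D`, the unique minimizer `θ̂_r*` of `L̂_{D_r}`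
lies in the affine subspace `C = θ̂* + col(J(X)ᵀ)`, i.e. in the range of `φ`. -/
theorem stmt_3 {din dout dθ n : ℕ} (hn : 0 < n)
    (f0 : (Fin din → ℝ) → Fin dout → ℝ)
    (J : (Fin din → ℝ) → Matrix (Fin dout) (Fin dθ) ℝ)
    (θ' : Fin dθ → ℝ) (X : Fin n → Fin din → ℝ) (Y : Fin n → Fin dout → ℝ)
    (ℓ : (Fin dout → ℝ) → (Fin dout → ℝ) → ℝ) (lam : ℝ)
    (hℓ0 : ∀ u ytgt, 0 ≤ ℓ u ytgt)
    (hconv : ∀ ytgt, ConvexOn ℝ Set.univ fun u => ℓ u ytgt)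
    (hdiff : ∀ ytgt, Differentiable ℝ fun u => ℓ u ytgt)
    (hlam : 0 < lam)
    (Dr : Finset (Fin n)) (hDr : Dr.Nonempty)
    (θstar θrstar : Fin dθ → ℝ)
    (hmin : ∀ θ : Fin dθ → ℝ,
      empRisk f0 J θ' X Y ℓ lam Finset.univ θstar ≤ empRisk f0 J θ' X Y ℓ lam Finset.univ θ)
    (hminr : ∀ θ : Fin dθ → ℝ,
      empRisk f0 J θ' X Y ℓ lam Dr θrstar ≤ empRisk f0 J θ' X Y ℓ lam Dr θ) :
    ∃ α : Fin n × Fin dout → ℝ, θrstar = θstar + (JX J X)ᵀ *ᵥ α := by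
  
  classical
  set V : Submodule ℝ (EuclideanSpace ℝ (Fin dθ)) :=
    Submodule.span ℝ (Set.range fun q : Fin n × Fin dout =>
      (WithLp.toLp 2 (JX J X q) : EuclideanSpace ℝ (Fin dθ))) with hV
  have h1 := min_sub_mem_span f0 J θ' X Y ℓ lam hlam Finset.univ
    (Finset.univ_nonempty_iff.mpr ⟨⟨0, hn⟩⟩) θstar hmin
  have h2 := min_sub_mem_span f0 J θ' X Y ℓ lam hlam Dr hDr θrstar hminr
  have hmem : (WithLp.toLp 2 (θrstar - θstar) : EuclideanSpace ℝ (Fin dθ)) ∈ V := by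
    have h := V.sub_mem h2 h1
    have e : (θrstar - θ') - (θstar - θ') = θrstar - θstar :=
      sub_sub_sub_cancel_right _ _ _
    exact e ▸ h
  obtain ⟨α, hα⟩ := span_to_mulVec (JX J X) _ hmem
  refine ⟨α, ?_⟩
  rw [hα]
  show θrstar = θstar + (θrstar - θstar)
  abel
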